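/- Fix p ∈ (0,1) with p ≠ 1/2. There exists a constant c > 0 such that for all n, every 1 ≤ k ≤ N, and every x ∈ S_k: if x' is obtained from x by flipping each bit independently with probability p, then P(x' ∈ S_{k−1}) ≥ c · (p^p (1−p)^{1−p})^n. In particular, the probability of moving from any stepping stone S_k to the next-higher-fitness level set S_{k−1} in one mutation step is Ω(1/α^n), where α = 1/(p^p(1−p)^{1−p}). -/

import Mathlib

open Finset
open scoped Classical

namespace DSS

/-- Number of ones of a bit string. -/
def ones {n : ℕ} (x : Fin n → Bool) : ℕ := (Finset.univ.filter fun i => x i = true).card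

/-- Hamming distance between two bit strings. -/
def hamming {n : ℕ} (x y : Fin n → Bool) : ℕ := (Finset.univ.filter fun i => x i ≠ y i).card

/-- The all-ones string. -/
def allOnes (n : ℕ) : Fin n → Bool := fun _ => true

/-- Probability that mutating `x` (flipping each bit independently with probability `q`)
produces exactly `y`. -/
noncomputable def flipProb {n : ℕ} (q : ℝ) (x y : Fin n → Bool) : ℝ :=
  q ^ hamming x y * (1 - q) ^ (n - hamming x y)

/-- Probability that the offspring of `x` under mutation rate `q` lies in the set `E`. -/
noncomputable def mutProb {n : ℕ} (q : ℝ) (x : Fin n → Bool) (E : Set (Fin n → Bool)) : ℝ :=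
  ∑ y : Fin n → Bool, if y ∈ E then flipProb q x y else 0

/-- One-step transition probability of the (1+1) EA on fitness `f` with mutation rate `q`. -/
noncomputable def eaStep {n : ℕ} (f : (Fin n → Bool) → ℝ) (q : ℝ) (x y : Fin n → Bool) : ℝ :=
  (if f x ≤ f y then flipProb q x y else 0) +
    (if y = x then ∑ z : Fin n → Bool, if f z < f x then flipProb q x z else 0 else 0)

/-- Sub-probability mass of the (1+1) EA chain killed upon entering `A`, starting from the
initial mass function `μ0`: `eaKilled f q A μ0 t y` is the probability that the chain has
avoided `A` at all times `0,…,t` and is at `y` at time `t`. -/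
noncomputable def eaKilled {n : ℕ} (f : (Fin n → Bool) → ℝ) (q : ℝ)
    (A : Set (Fin n → Bool)) (μ0 : (Fin n → Bool) → ℝ) : ℕ → (Fin n → Bool) → ℝ
  | 0, y => if y ∈ A then 0 else μ0 y
  | t + 1, y => if y ∈ A then 0
      else ∑ x : Fin n → Bool, eaKilled f q A μ0 t x * eaStep f q x y

/-- The uniform distribution on bit strings. -/
noncomputable def uniform (n : ℕ) : (Fin n → Bool) → ℝ := fun _ => (1 : ℝ) / 2 ^ n

/-- Expected hitting time of the set `A` for the (1+1) EA on `f` with mutation rate `q` and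
initial distribution `μ0`, via `E[T] = ∑_{t ≥ 0} P(T > t)`. -/
noncomputable def eaHitTime {n : ℕ} (f : (Fin n → Bool) → ℝ) (q : ℝ)
    (A : Set (Fin n → Bool)) (μ0 : (Fin n → Bool) → ℝ) : ℝ :=
  ∑' t : ℕ, ∑ y : Fin n → Bool, eaKilled f q A μ0 t y

/-- The set of global maxima of a fitness function. -/
def maxSet {n : ℕ} (f : (Fin n → Bool) → ℝ) : Set (Fin n → Bool) := {x | ∀ y, f y ≤ f x}

/-- Expected runtime `E[T(q)]` of the (1+1) EA on `f` with mutation rate `q`: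
the expectation of the least `t ≥ 0` such that `X_t` is a global maximum of `f`,
started from the uniform distribution. -/
noncomputable def expectedRuntime {n : ℕ} (f : (Fin n → Bool) → ℝ) (q : ℝ) : ℝ :=
  eaHitTime f q (maxSet f) (uniform n)

/-- The map `f_p(x) = p(1-x) + (1-p)x`. -/
noncomputable def fp (p : ℝ) (x : ℝ) : ℝ := p * (1 - x) + (1 - p) * x

/-- `s p k = f_p^{(k)}(1)`. -/
noncomputable def s (p : ℝ) (k : ℕ) : ℝ := (fp p)^[k] 1

/-- `N(n)`: the least `k ≥ 1` with `⌊n s_k⌋ = ⌊n/2⌋`. -/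
noncomputable def NN (p : ℝ) (n : ℕ) : ℕ :=
  sInf {k : ℕ | 1 ≤ k ∧ ⌊(n : ℝ) * s p k⌋ = ⌊(n : ℝ) / 2⌋}

/-- `x ∈ S_k`, i.e. the number of ones of `x` is `⌊n s_k⌋`. -/
def inStone (p : ℝ) {n : ℕ} (k : ℕ) (x : Fin n → Bool) : Prop :=
  (ones x : ℤ) = ⌊(n : ℝ) * s p k⌋

/-- The fitness function `DistantSteppingStones_p`: value `N + 1 - k` on `S_k`
(for the least such `k ≤ N`), and `0` elsewhere. -/
noncomputable def dss (p : ℝ) (n : ℕ) (x : Fin n → Bool) : ℝ :=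
  if ∃ k ≤ NN p n, inStone p k x
  then ((NN p n + 1 - sInf {k : ℕ | k ≤ NN p n ∧ inStone p k x} : ℕ) : ℝ)
  else 0

/-- The union of the stepping stones `S_1, …, S_N`. -/
def stones (p : ℝ) (n : ℕ) : Set (Fin n → Bool) :=
  {x | ∃ k, 1 ≤ k ∧ k ≤ NN p n ∧ inStone p k x}

/-- Sub-probability mass of the pure mutation chain (every offspring accepted) killed upon
entering `A` at times `t ≥ 1`, started at `x0`. -/
noncomputable def pureKilled {n : ℕ} (q : ℝ) (A : Set (Fin n → Bool)) (x0 : Fin n → Bool) :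
    ℕ → (Fin n → Bool) → ℝ
  | 0, y => if y = x0 then 1 else 0
  | t + 1, y => if y ∈ A then 0
      else ∑ x : Fin n → Bool, pureKilled q A x0 t x * flipProb q x y

/-- Expected value of the first time `t ≥ 1` at which the pure mutation chain started at
`x0` lies in `A`, via `E[T] = ∑_{t ≥ 0} P(T > t)`. -/
noncomputable def pureHitTime {n : ℕ} (q : ℝ) (A : Set (Fin n → Bool)) (x0 : Fin n → Bool) : ℝ :=
  ∑' t : ℕ, ∑ y : Fin n → Bool, pureKilled q A x0 t y

/-- Probability that the (1+1) EA on `f` with mutation rate `q`, started uniformly at random,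
visits the set `B` strictly before the set `A`. -/
noncomputable def reachBeforeProb {n : ℕ} (f : (Fin n → Bool) → ℝ) (q : ℝ)
    (A B : Set (Fin n → Bool)) : ℝ :=
  (∑ y : Fin n → Bool, if y ∈ B then uniform n y else 0) +
    ∑' t : ℕ, ∑ x : Fin n → Bool, eaKilled f q (A ∪ B) (uniform n) t x *
      ∑ y : Fin n → Bool, if y ∈ B then eaStep f q x y else 0

/-- Probability that, within the next `M` iterations of the (1+1) EA on `f` with mutation
rate `q` started at the current individual `x`, some produced offspring (accepted or not)
lies in `G`. -/
noncomputable def offspringReach {n : ℕ} (f : (Fin n → Bool) → ℝ) (q : ℝ)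
    (G : Set (Fin n → Bool)) : ℕ → (Fin n → Bool) → ℝ
  | 0, _ => 0
  | M + 1, x => ∑ y : Fin n → Bool,
      flipProb q x y *
        (if y ∈ G then 1 else offspringReach f q G M (if f x ≤ f y then y else x))


lemma ones_le_n {n : ℕ} (x : Fin n → Bool) : ones x ≤ n := by
  calc ones x ≤ Finset.univ.card := Finset.card_filter_le _ _
    _ = n := by simp

lemma s_eq (p : ℝ) (k : ℕ) : s p k = 1/2 + (1 - 2*p)^k / 2 := by
  induction k with
  | zero => norm_num [s]
  | succ k ih =>
    rw [s, Function.iterate_succ_apply', show (fp p)^[k] 1 = s p k from rfl, ih, fp]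
    ring

lemma exists_flip {n : ℕ} (x : Fin n → Bool) (a b : ℕ)
    (ha : a + ones x ≤ n) (hb : b ≤ ones x) :
    ∃ y : Fin n → Bool, ones y + b = ones x + a ∧ hamming x y = a + b := by
  classical
  set O : Finset (Fin n) := Finset.univ.filter (fun i => x i = true) with hO
  have hOcard : O.card = ones x := rfl
  have hZcard : Oᶜ.card = n - ones x := by
    rw [Finset.card_compl, hOcard]; simp
  obtain ⟨A, hA_sub, hA_card⟩ := Finset.exists_subset_card_eq (s := Oᶜ) (n := a) (by omega)
  obtain ⟨B, hB_sub, hB_card⟩ := Finset.exists_subset_card_eq (s := O) (n := b) (by omega)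
  have hAx : ∀ i ∈ A, x i = false := by
    intro i hi
    have h := hA_sub hi
    simp only [hO, Finset.mem_compl, Finset.mem_filter, Finset.mem_univ, true_and] at h
    simpa using h
  have hBx : ∀ i ∈ B, x i = true := by
    intro i hi
    have h := hB_sub hi
    simpa [hO] using h
  have hAB : Disjoint A B := by
    rw [Finset.disjoint_left]
    intro i hiA hiB
    have h1 := hAx i hiA
    have h2 := hBx i hiB
    simp [h1] at h2
  refine ⟨fun i => if i ∈ A then true else if i ∈ B then false else x i, ?_, ?_⟩
  · have hset : (Finset.univ.filter fun i =>
        (if i ∈ A then true else if i ∈ B then false else x i) = true)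
        = A ∪ (O \ B) := by
      ext i
      by_cases hiA : i ∈ A
      · simp [hiA]
      · by_cases hiB : i ∈ B
        · simp [hiA, hiB]
        · simp [hiA, hiB, hO]
    have hdisj : Disjoint A (O \ B) := by
      rw [Finset.disjoint_left]
      intro i hiA hiOB
      have h1 := hAx i hiA
      have h2 : i ∈ O := (Finset.mem_sdiff.mp hiOB).1
      rw [hO, Finset.mem_filter] at h2
      simp [h1] at h2
    have : ones (fun i => if i ∈ A then true else if i ∈ B then false else x i)
        = a + (ones x - b) := by
      rw [ones, hset, Finset.card_union_of_disjoint hdisj, hA_card,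
        Finset.card_sdiff_of_subset hB_sub, hOcard, hB_card]
    omega
  · have hset : (Finset.univ.filter fun i =>
        x i ≠ (if i ∈ A then true else if i ∈ B then false else x i)) = A ∪ B := by
      ext i
      by_cases hiA : i ∈ A
      · simp [hiA, hAx i hiA]
      · by_cases hiB : i ∈ B
        · simp [hiA, hiB, hBx i hiB]
        · simp [hiA, hiB]
    rw [hamming, hset, Finset.card_union_of_disjoint hAB, hA_card, hB_card]

lemma mutProb_ge {n : ℕ} {q : ℝ} (hq0 : 0 ≤ q) (hq1 : q ≤ 1)
    (x y0 : Fin n → Bool) (E : Set (Fin n → Bool)) (hy : y0 ∈ E) :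
    flipProb q x y0 ≤ mutProb q x E := by
  have h : ∀ y : Fin n → Bool, y ∈ Finset.univ →
      (0:ℝ) ≤ if y ∈ E then flipProb q x y else 0 := by
    intro y _
    split
    · exact mul_nonneg (pow_nonneg hq0 _) (pow_nonneg (by linarith) _)
    · exact le_rfl
  calc flipProb q x y0 = (if y0 ∈ E then flipProb q x y0 else 0) := by rw [if_pos hy]
    _ ≤ mutProb q x E := Finset.single_le_sum h (Finset.mem_univ y0)

lemma final_bound {p c : ℝ} (hp0 : 0 < p) (hp1 : p < 1) {n d : ℕ} (hdn : d ≤ n)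
    (hc : c ≤ (p/(1-p)) ^ ((d:ℝ) - p * n)) :
    c * (p ^ p * (1 - p) ^ (1 - p)) ^ n ≤ p ^ d * (1-p) ^ (n - d) := by
  have h1p : 0 < 1 - p := by linarith
  have hr0 : 0 < p / (1-p) := div_pos hp0 h1p
  have e1 : p ^ d * (1-p) ^ (n - d) = (p/(1-p)) ^ d * (1-p) ^ n := by
    have h2 : (p/(1-p)) ^ d * (1-p) ^ d = p ^ d := by
      rw [div_pow, div_mul_cancel₀ _ (pow_ne_zero d (ne_of_gt h1p))]
    calc p ^ d * (1-p)^(n-d) = ((p/(1-p))^d * (1-p)^d) * (1-p)^(n-d) := by rw [h2]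
      _ = (p/(1-p))^d * ((1-p)^d * (1-p)^(n-d)) := by ring
      _ = (p/(1-p))^d * (1-p)^n := by rw [← pow_add, Nat.add_sub_cancel' hdn]
  have e2 : (p ^ p * (1 - p) ^ (1 - p)) ^ n = (p/(1-p)) ^ (p * (n:ℝ)) * (1-p) ^ n := by
    have h3 : p ^ p * (1 - p) ^ (1 - p : ℝ) = (p/(1-p)) ^ (p:ℝ) * (1-p) := by
      rw [Real.div_rpow hp0.le h1p.le]
      rw [show (1 - p : ℝ) ^ (1 - p : ℝ) = (1-p) ^ (1:ℝ) / (1-p) ^ (p:ℝ) from by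
        rw [← Real.rpow_sub h1p]]
      rw [Real.rpow_one]
      have hne : (1-p:ℝ) ^ (p:ℝ) ≠ 0 := ne_of_gt (Real.rpow_pos_of_pos h1p p)
      field_simp
    rw [h3, mul_pow, ← Real.rpow_natCast ((p/(1-p)) ^ (p:ℝ)) n, ← Real.rpow_mul hr0.le]
  rw [e1, e2]
  have e3 : (p/(1-p)) ^ ((d:ℝ) - p*n) * (p/(1-p)) ^ (p*(n:ℝ)) = (p/(1-p)) ^ d := by
    rw [← Real.rpow_add hr0, ← Real.rpow_natCast (p/(1-p)) d]
    congr 1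
    ring
  rw [← e3]
  have h4 : (0:ℝ) ≤ (p/(1-p)) ^ (p*(n:ℝ)) * (1-p)^n :=
    mul_nonneg (Real.rpow_nonneg hr0.le _) (pow_nonneg h1p.le n)
  calc c * ((p/(1-p)) ^ (p*(n:ℝ)) * (1-p)^n)
      ≤ (p/(1-p)) ^ ((d:ℝ) - p*n) * ((p/(1-p)) ^ (p*(n:ℝ)) * (1-p)^n) :=
        mul_le_mul_of_nonneg_right hc h4
    _ = (p/(1-p)) ^ ((d:ℝ) - p*n) * (p/(1-p)) ^ (p*(n:ℝ)) * (1-p)^n := by ring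


set_option maxHeartbeats 1000000 in
/-- For fixed `p ∈ (0,1)`, `p ≠ 1/2`, there is `c > 0` such that for all `n`,
all `1 ≤ k ≤ N` and all `x ∈ S_k`, a single mutation step with rate `p` moves `x` into
`S_(k-1)` with probability at least `c · (p^p (1-p)^(1-p))^n`. -/
theorem prob_next_stone (p : ℝ) (hp : p ∈ Set.Ioo (0 : ℝ) 1) (hp2 : p ≠ 1/2) :
    ∃ c : ℝ, 0 < c ∧ ∀ n k : ℕ, 1 ≤ k → k ≤ NN p n → ∀ x : Fin n → Bool, inStone p k x →
      c * (p ^ p * (1 - p) ^ (1 - p)) ^ n ≤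
        mutProb p x {y : Fin n → Bool | inStone p (k - 1) y} := by
  obtain ⟨hp0, hp1⟩ := hp
  have h1p : 0 < 1 - p := by linarith
  have hr0 : 0 < p / (1-p) := div_pos hp0 h1p
  refine ⟨min (p/(1-p)) (((1-p)/p)^2),
    lt_min hr0 (pow_pos (div_pos h1p hp0) 2), ?_⟩
  intro n k hk1 _ x hx
  obtain ⟨j, rfl⟩ : ∃ j, k = j + 1 := ⟨k - 1, by omega⟩
  simp only [Nat.add_sub_cancel]
  -- basic facts about s
  have hqabs : ∀ i : ℕ, -1 ≤ (1 - 2*p)^i ∧ (1 - 2*p)^i ≤ 1 := by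
    intro i
    have h := abs_le.mp (show |(1-2*p)^i| ≤ 1 from by
      rw [abs_pow]
      exact pow_le_one₀ (abs_nonneg _) (abs_le.mpr ⟨by linarith, by linarith⟩))
    exact h
  have hs0 : ∀ i : ℕ, 0 ≤ s p i := by
    intro i; rw [s_eq]; have := (hqabs i).1; linarith
  have hs1 : ∀ i : ℕ, s p i ≤ 1 := by
    intro i; rw [s_eq]; have := (hqabs i).2; linarith
  have hnn : (0:ℝ) ≤ (n:ℝ) := Nat.cast_nonneg n
  -- m and t
  have hmz : ((ones x : ℤ)) = ⌊(n:ℝ) * s p (j+1)⌋ := hx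
  have hmn : ones x ≤ n := ones_le_n x
  have htz0 : 0 ≤ ⌊(n:ℝ) * s p j⌋ := Int.floor_nonneg.mpr (mul_nonneg hnn (hs0 j))
  set m := ones x with hmdef
  set t := (⌊(n:ℝ) * s p j⌋).toNat with htdef
  have htz : (t:ℤ) = ⌊(n:ℝ) * s p j⌋ := Int.toNat_of_nonneg htz0
  have hmR1 : (m:ℝ) ≤ (n:ℝ) * s p (j+1) := by
    have h := Int.floor_le ((n:ℝ) * s p (j+1)); rw [← hmz] at h; exact_mod_cast h
  have hmR2 : (n:ℝ) * s p (j+1) - 1 < (m:ℝ) := by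
    have h := Int.sub_one_lt_floor ((n:ℝ) * s p (j+1)); rw [← hmz] at h; exact_mod_cast h
  have htR1 : (t:ℝ) ≤ (n:ℝ) * s p j := by
    have h := Int.floor_le ((n:ℝ) * s p j); rw [← htz] at h; exact_mod_cast h
  have htR2 : (n:ℝ) * s p j - 1 < (t:ℝ) := by
    have h := Int.sub_one_lt_floor ((n:ℝ) * s p j); rw [← htz] at h; exact_mod_cast h
  have htn : t ≤ n := by
    have h : (t:ℝ) ≤ (n:ℝ) := le_trans htR1 (by nlinarith [hs1 j])
    exact_mod_cast h
  have hsum : s p j + s p (j+1) = 1 + (1-2*p)^j * (1-p) := by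
    rw [s_eq, s_eq, pow_succ]; ring
  have hsum_lo : p * (n:ℝ) ≤ (n:ℝ) * (s p j + s p (j+1)) := by
    have h1 := (hqabs j).1
    rw [hsum]
    nlinarith [mul_nonneg (mul_nonneg hnn h1p.le) (by linarith : (0:ℝ) ≤ 1 + (1-2*p)^j)]
  have hsum_hi : (n:ℝ) * (s p j + s p (j+1)) ≤ (2 - p) * n := by
    have h2 := (hqabs j).2
    rw [hsum]
    nlinarith [mul_nonneg (mul_nonneg hnn h1p.le) (by linarith : (0:ℝ) ≤ 1 - (1-2*p)^j)]
  -- obtain the witness y and bounds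
  have key : ∃ y : Fin n → Bool, (ones y : ℤ) = ⌊(n:ℝ) * s p j⌋ ∧ hamming x y ≤ n ∧
      min (p/(1-p)) (((1-p)/p)^2) ≤ (p/(1-p)) ^ (((hamming x y : ℕ):ℝ) - p * n) := by
    rcases lt_or_gt_of_ne hp2 with hplt | hpgt
    · -- p < 1/2 : use minimal distance t - m
      have hq0 : (0:ℝ) ≤ 1 - 2*p := by linarith
      have hdiff : s p j - s p (j+1) = (1-2*p)^j * p := by
        rw [s_eq, s_eq, pow_succ]; ring
      have hss : s p (j+1) ≤ s p j := by
        have := pow_nonneg hq0 j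
        nlinarith [hdiff]
      have hmt : m ≤ t := by
        have h := Int.floor_le_floor (mul_le_mul_of_nonneg_left hss hnn)
        rw [← hmz, ← htz] at h
        exact_mod_cast h
      obtain ⟨y, hy1, hy2⟩ := exists_flip x (t - m) 0 (by omega) (Nat.zero_le _)
      have hyones : ones y = t := by omega
      refine ⟨y, by rw [hyones]; exact htz, by omega, ?_⟩
      have hdR : (((hamming x y : ℕ)):ℝ) = (t:ℝ) - (m:ℝ) := by
        rw [hy2]
        push_cast [Nat.cast_sub hmt]
        ring
      have hrlt : p/(1-p) < 1 := by rw [div_lt_one h1p]; linarith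
      have hexp : (((hamming x y : ℕ)):ℝ) - p * n ≤ 1 := by
        rw [hdR]
        have hq_j0 : (0:ℝ) ≤ (1-2*p)^j := pow_nonneg hq0 j
        have hq_j1 : (1-2*p)^j ≤ 1 := (hqabs j).2
        have h5 : (t:ℝ) - m ≤ (n:ℝ) * ((1-2*p)^j * p) + 1 := by
          rw [← hdiff]; nlinarith
        nlinarith
      calc min (p/(1-p)) (((1-p)/p)^2) ≤ p/(1-p) := min_le_left _ _
        _ = (p/(1-p)) ^ (1:ℝ) := (Real.rpow_one _).symm
        _ ≤ (p/(1-p)) ^ (((hamming x y : ℕ):ℝ) - p * n) :=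
          Real.rpow_le_rpow_of_exponent_ge hr0 hrlt.le hexp
    · -- p > 1/2 : use large distance
      have hrgt : 1 < p/(1-p) := by rw [lt_div_iff₀ h1p]; linarith
      have hkey : ∃ y : Fin n → Bool, ones y = t ∧ hamming x y ≤ n ∧
          p * (n:ℝ) - 2 ≤ ((hamming x y : ℕ):ℝ) := by
        by_cases hcase : m + t ≤ n
        · obtain ⟨y, hy1, hy2⟩ := exists_flip x t m (by omega) le_rfl
          refine ⟨y, by omega, by omega, ?_⟩
          have hdR : (((hamming x y : ℕ)):ℝ) = (t:ℝ) + (m:ℝ) := by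
            rw [hy2]; push_cast; ring
          rw [hdR]
          nlinarith
        · obtain ⟨y, hy1, hy2⟩ := exists_flip x (n - m) (n - t) (by omega) (by omega)
          refine ⟨y, by omega, by omega, ?_⟩
          have hdR : (((hamming x y : ℕ)):ℝ) = 2*(n:ℝ) - (m:ℝ) - (t:ℝ) := by
            rw [hy2]
            push_cast [Nat.cast_sub hmn, Nat.cast_sub htn]
            ring
          rw [hdR]
          nlinarith
      obtain ⟨y, hyones, hyn, hyd⟩ := hkey
      refine ⟨y, by rw [hyones]; exact htz, hyn, ?_⟩
      have hexp : (-2:ℝ) ≤ ((hamming x y : ℕ):ℝ) - p * n := by linarith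
      calc min (p/(1-p)) (((1-p)/p)^2) ≤ ((1-p)/p)^2 := min_le_right _ _
        _ = (p/(1-p)) ^ (-2:ℝ) := by
          rw [Real.rpow_neg hr0.le, show ((2:ℝ)) = ((2:ℕ):ℝ) from by norm_num,
            Real.rpow_natCast, ← inv_pow, inv_div]
        _ ≤ (p/(1-p)) ^ (((hamming x y : ℕ):ℝ) - p * n) :=
          Real.rpow_le_rpow_of_exponent_le hrgt.le hexp
  obtain ⟨y, hyStone, hyn, hyc⟩ := key
  calc min (p/(1-p)) (((1-p)/p)^2) * (p ^ p * (1 - p) ^ (1 - p)) ^ n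
      ≤ p ^ (hamming x y) * (1-p) ^ (n - hamming x y) := final_bound hp0 hp1 hyn hyc
    _ = flipProb p x y := rfl
    _ ≤ mutProb p x {y : Fin n → Bool | inStone p j y} :=
        mutProb_ge hp0.le hp1.le x y _ hyStone

end DSS
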